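/- arXiv:1506.05826 — 5 statements merged into one kernel-verified Lean document; each statement's English description precedes it below -/
import Mathlib

section
/- For every natural number n ≥ 3, the 3-hairy n-cycle C_n ⋆ S_3 admits a prime vertex labeling; that is, there exists a bijection f from the vertex set of C_n ⋆ S_3 onto {1, 2, ..., 4n} such that whenever two vertices u and v are adjacent, gcd(f(u), f(v)) = 1. -/
/-- The `m`-hairy `n`-cycle `C_n ⋆ S_m` on vertex set `Fin n × Fin (m+1)`:
the vertices `(i, 0)` form the cycle (with `(i,0)` adjacent to `(j,0)` iff
`j = i + 1 (mod n)` or `i = j + 1 (mod n)`), and for `j ≠ 0` the pendant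
vertex `(i, j)` is adjacent exactly to `(i, 0)`. -/
def hairyCycle (n m : ℕ) : SimpleGraph (Fin n × Fin (m + 1)) :=
  SimpleGraph.fromRel fun a b =>
    (a.2 = 0 ∧ b.2 = 0 ∧ (b.1 : ℕ) = ((a.1 : ℕ) + 1) % n) ∨
    (a.2 = 0 ∧ b.1 = a.1 ∧ b.2 ≠ 0)

/-- offset table: normal groups use `3,1,2,4` (center label `4i+3`),
the swapped group uses `1,3,2,4` (center label `4i+1`). -/
def hcTab : Bool → ℕ → ℕ
  | false, j => [3, 1, 2, 4].getD j 0
  | true, j => [1, 3, 2, 4].getD j 0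

lemma hcTab_mem : ∀ b (j : Fin 4), 1 ≤ hcTab b ↑j ∧ hcTab b ↑j ≤ 4 := by decide

lemma hcTab_inj : ∀ b (j j' : Fin 4), hcTab b ↑j = hcTab b ↑j' → j = j' := by
  decide

lemma hcTab_surj : ∀ b (t : Fin 4), ∃ j : Fin 4, hcTab b ↑j = ↑t + 1 := by
  decide

lemma hc_gstep (a x y : ℕ) (h : x ≤ y) :
    Nat.gcd (a + x) (a + y) = Nat.gcd (a + x) (y - x) := by
  conv_lhs => rw [show a + y = (y - x) + (a + x) by omega]
  exact Nat.gcd_add_self_right _ _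

lemma hc_cop2 (a : ℕ) (h : a % 2 = 1) : Nat.gcd a 2 = 1 := by
  have h2 : ¬ 2 ∣ a := by omega
  exact Nat.coprime_comm.mp ((Nat.prime_two.coprime_iff_not_dvd).mpr h2)

lemma hc_cop3 (a : ℕ) (h : ¬ 3 ∣ a) : Nat.gcd a 3 = 1 :=
  Nat.coprime_comm.mp ((Nat.prime_three.coprime_iff_not_dvd).mpr h)

lemma hc_cop4 (a : ℕ) (h : a % 2 = 1) : Nat.gcd a 4 = 1 := by
  have h2 : Nat.Coprime a 2 := hc_cop2 a h
  have := h2.pow_right 2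
  simpa using this

/-- All 3-hairy `n`-cycles `C_n ⋆ S_3` admit a prime vertex labeling. -/
theorem hairyCycle_three_is_coprime (n : ℕ) (hn : 3 ≤ n) :
    ∃ f : Fin n × Fin 4 → ℕ,
      Set.BijOn f Set.univ (Set.Icc 1 (4 * n)) ∧
      ∀ u v, (hairyCycle n 3).Adj u v → Nat.gcd (f u) (f v) = 1 := by
  set sw : Fin n → Bool := fun i => (n % 3 == 1) && ((i : ℕ) == n - 1) with hsw
  have swT : ∀ i : Fin n, sw i = true ↔ (n % 3 = 1 ∧ (i : ℕ) = n - 1) := by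
    intro i; simp [hsw]
  have swF : ∀ i : Fin n, sw i = false ↔ ¬(n % 3 = 1 ∧ (i : ℕ) = n - 1) := by
    intro i; rw [Bool.eq_false_iff]; exact not_congr (swT i)
  refine ⟨fun p => 4 * (p.1 : ℕ) + hcTab (sw p.1) (p.2 : ℕ), ⟨?_, ?_, ?_⟩, ?_⟩
  · -- MapsTo
    intro p _
    obtain ⟨h1, h2⟩ := hcTab_mem (sw p.1) p.2
    have hp := p.1.2
    constructor
    · show 1 ≤ 4 * (p.1 : ℕ) + hcTab (sw p.1) (p.2 : ℕ); omega
    · show 4 * (p.1 : ℕ) + hcTab (sw p.1) (p.2 : ℕ) ≤ 4 * n; omega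
  · -- InjOn
    intro p _ q _ h
    have h' : 4 * (p.1 : ℕ) + hcTab (sw p.1) (p.2 : ℕ)
        = 4 * (q.1 : ℕ) + hcTab (sw q.1) (q.2 : ℕ) := h
    obtain ⟨h1p, h2p⟩ := hcTab_mem (sw p.1) p.2
    obtain ⟨h1q, h2q⟩ := hcTab_mem (sw q.1) q.2
    have hi : (p.1 : ℕ) = (q.1 : ℕ) := by omega
    have hi' : p.1 = q.1 := Fin.ext hi
    rw [hi'] at h'
    have ht : hcTab (sw q.1) (p.2 : ℕ) = hcTab (sw q.1) (q.2 : ℕ) := by omega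
    exact Prod.ext hi' (hcTab_inj _ _ _ ht)
  · -- SurjOn
    intro k hk
    simp only [Set.mem_Icc] at hk
    have hi : (k - 1) / 4 < n := by omega
    obtain ⟨j, hj⟩ := hcTab_surj (sw ⟨(k - 1) / 4, hi⟩) ⟨(k - 1) % 4, by omega⟩
    refine ⟨(⟨(k - 1) / 4, hi⟩, j), Set.mem_univ _, ?_⟩
    show 4 * ((k - 1) / 4) + hcTab _ ↑j = k
    rw [hj]
    show 4 * ((k - 1) / 4) + ((k - 1) % 4 + 1) = k
    omega
  · -- adjacency
    intro u v hadj
    rw [hairyCycle, SimpleGraph.fromRel_adj] at hadj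
    obtain ⟨hne, hrel⟩ := hadj
    have key : ∀ a b : Fin n × Fin 4,
        ((a.2 = 0 ∧ b.2 = 0 ∧ (b.1 : ℕ) = ((a.1 : ℕ) + 1) % n) ∨
          (a.2 = 0 ∧ b.1 = a.1 ∧ b.2 ≠ 0)) →
        Nat.gcd (4 * (a.1 : ℕ) + hcTab (sw a.1) (a.2 : ℕ))
          (4 * (b.1 : ℕ) + hcTab (sw b.1) (b.2 : ℕ)) = 1 := by
      rintro ⟨a1, a2⟩ ⟨b1, b2⟩ h
      dsimp only at h ⊢
      rcases h with ⟨ha2, hb2, hcyc⟩ | ⟨ha2, hb1, hb2⟩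
      · -- cycle edge
        subst ha2; subst hb2
        have hilt : (a1 : ℕ) < n := a1.2
        by_cases hw : (a1 : ℕ) + 1 < n
        · -- no wrap
          have hb : (b1 : ℕ) = (a1 : ℕ) + 1 := by
            rw [hcyc, Nat.mod_eq_of_lt hw]
          have hsa : sw a1 = false := (swF a1).mpr (by omega)
          by_cases hvs : n % 3 = 1 ∧ (a1 : ℕ) + 1 = n - 1
          · have hsb : sw b1 = true := (swT b1).mpr ⟨hvs.1, by omega⟩
            rw [hsa, hsb, hb]
            show Nat.gcd (4 * (a1:ℕ) + 3) (4 * ((a1:ℕ) + 1) + 1) = 1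
            rw [show 4 * ((a1:ℕ) + 1) + 1 = 4 * (a1:ℕ) + 5 by ring,
              hc_gstep (4 * (a1:ℕ)) 3 5 (by omega)]
            exact hc_cop2 _ (by omega)
          · have hsb : sw b1 = false := (swF b1).mpr (by
              intro h; exact hvs ⟨h.1, by omega⟩)
            rw [hsa, hsb, hb]
            show Nat.gcd (4 * (a1:ℕ) + 3) (4 * ((a1:ℕ) + 1) + 3) = 1
            rw [show 4 * ((a1:ℕ) + 1) + 3 = 4 * (a1:ℕ) + 7 by ring,
              hc_gstep (4 * (a1:ℕ)) 3 7 (by omega)]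
            exact hc_cop4 _ (by omega)
        · -- wrap: a1 = n - 1, b1 = 0
          have hieq : (a1 : ℕ) = n - 1 := by omega
          have hb : (b1 : ℕ) = 0 := by
            rw [hcyc, show (a1 : ℕ) + 1 = n by omega, Nat.mod_self]
          have hsb : sw b1 = false := (swF b1).mpr (by omega)
          rw [hsb, hb]
          by_cases hm : n % 3 = 1
          · have hsa : sw a1 = true := (swT a1).mpr ⟨hm, hieq⟩
            rw [hsa]
            show Nat.gcd (4 * (a1:ℕ) + 1) (4 * 0 + 3) = 1
            simp only [Nat.mul_zero, Nat.zero_add]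
            exact hc_cop3 _ (by omega)
          · have hsa : sw a1 = false := (swF a1).mpr (by omega)
            rw [hsa]
            show Nat.gcd (4 * (a1:ℕ) + 3) (4 * 0 + 3) = 1
            simp only [Nat.mul_zero, Nat.zero_add]
            exact hc_cop3 _ (by omega)
      · -- pendant edge
        subst ha2; rw [hb1]
        have hb2' : (b2 : ℕ) ≠ 0 := by
          intro h; exact hb2 (Fin.ext h)
        have hb2lt : (b2 : ℕ) < 4 := b2.2
        rcases Bool.eq_false_or_eq_true (sw a1) with hbs | hbs <;> rw [hbs]
        · have h3 := (swT a1).mp hbs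
          have hmod : (a1 : ℕ) % 3 = 0 := by
            have := a1.2; omega
          have hj : (b2 : ℕ) = 1 ∨ (b2 : ℕ) = 2 ∨ (b2 : ℕ) = 3 := by omega
          rcases hj with hj | hj | hj <;> rw [hj]
          · show Nat.gcd (4 * (a1:ℕ) + 1) (4 * (a1:ℕ) + 3) = 1
            rw [hc_gstep (4 * (a1:ℕ)) 1 3 (by omega)]
            exact hc_cop2 _ (by omega)
          · show Nat.gcd (4 * (a1:ℕ) + 1) (4 * (a1:ℕ) + 2) = 1
            rw [hc_gstep (4 * (a1:ℕ)) 1 2 (by omega)]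
            exact Nat.gcd_one_right _
          · show Nat.gcd (4 * (a1:ℕ) + 1) (4 * (a1:ℕ) + 4) = 1
            rw [hc_gstep (4 * (a1:ℕ)) 1 4 (by omega)]
            exact hc_cop3 _ (by omega)
        · have hj : (b2 : ℕ) = 1 ∨ (b2 : ℕ) = 2 ∨ (b2 : ℕ) = 3 := by omega
          rcases hj with hj | hj | hj <;> rw [hj]
          · show Nat.gcd (4 * (a1:ℕ) + 3) (4 * (a1:ℕ) + 1) = 1
            rw [Nat.gcd_comm, hc_gstep (4 * (a1:ℕ)) 1 3 (by omega)]
            exact hc_cop2 _ (by omega)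
          · show Nat.gcd (4 * (a1:ℕ) + 3) (4 * (a1:ℕ) + 2) = 1
            rw [Nat.gcd_comm, hc_gstep (4 * (a1:ℕ)) 2 3 (by omega)]
            exact Nat.gcd_one_right _
          · show Nat.gcd (4 * (a1:ℕ) + 3) (4 * (a1:ℕ) + 4) = 1
            rw [hc_gstep (4 * (a1:ℕ)) 3 4 (by omega)]
            exact Nat.gcd_one_right _
    rcases hrel with h | h
    · exact key u v h
    · rw [Nat.gcd_comm]; exact key v u h
end

section
/- For every natural number n ≥ 3, the 7-hairy n-cycle C_n ⋆ S_7 admits a prime vertex labeling; that is, there exists a bijection f from the vertex set of C_n ⋆ S_7 onto {1, 2, ..., 8n} such that whenever two vertices u and v are adjacent, gcd(f(u), f(v)) = 1. -/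
def cOff (i : ℕ) : ℕ :=
  if i = 0 then 1 else
  if i % 3 ≠ 2 then 5 else
  if i % 5 ≠ 4 then 3 else
  if i % 7 ≠ 6 then 1 else 7

def offL (cv j : ℕ) : ℕ := if j = 0 then cv else if j < cv then j else j + 1

lemma cOff_spec (i : ℕ) : cOff i % 2 = 1 ∧ 1 ≤ cOff i ∧ cOff i ≤ 7 := by
  unfold cOff; split_ifs <;> omega

lemma cOff_mod3 (i : ℕ) : (8 * i + cOff i) % 3 ≠ 0 := by
  unfold cOff; split_ifs <;> omega

lemma cOff_mod5 (i : ℕ) (h : cOff i ≠ 5) : (8 * i + cOff i) % 5 ≠ 0 := by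
  unfold cOff at h ⊢; split_ifs at h ⊢ <;> omega

lemma cOff_mod7 (i : ℕ) (h : cOff i = 1) : (8 * i + cOff i) % 7 ≠ 0 := by
  unfold cOff at h ⊢; split_ifs at h ⊢ <;> omega

lemma cOff_seven (i : ℕ) (h : cOff i = 7) : i % 5 = 4 := by
  unfold cOff at h; split_ifs at h <;> omega

lemma offL_bounds (cv j : ℕ) (h1 : 1 ≤ cv) (h2 : cv ≤ 7) (h3 : j ≤ 7) :
    1 ≤ offL cv j ∧ offL cv j ≤ 8 := by
  unfold offL; split_ifs <;> omega

lemma offL_inj (cv j j' : ℕ) (h : offL cv j = offL cv j') : j = j' := by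
  unfold offL at h; split_ifs at h <;> omega

lemma cop' (a b d : ℕ) (hd : b = a + d ∨ a = b + d) (h2 : a % 2 = 1)
    (h3 : a % 3 ≠ 0) (h5 : 5 ∣ d → ¬ 5 ∣ a) (h7 : 7 ∣ d → ¬ 7 ∣ a)
    (hd1 : 1 ≤ d) (hd2 : d ≤ 14) (h11 : d ≠ 11) (h13 : d ≠ 13) :
    Nat.gcd a b = 1 := by
  have hga := Nat.gcd_dvd_left a b
  have hgb := Nat.gcd_dvd_right a b
  have hg : Nat.gcd a b ∣ d := by
    rcases hd with h | h
    · have := Nat.dvd_sub hgb hga; rwa [show b - a = d by omega] at this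
    · have := Nat.dvd_sub hga hgb; rwa [show a - b = d by omega] at this
  have c2 : Nat.Coprime a 2 := (Nat.prime_two.coprime_iff_not_dvd.mpr (by omega)).symm
  have c3 : Nat.Coprime a 3 := (Nat.prime_three.coprime_iff_not_dvd.mpr (by omega)).symm
  have c5 : ¬ 5 ∣ a → Nat.Coprime a 5 := fun h =>
    ((by norm_num : Nat.Prime 5).coprime_iff_not_dvd.mpr h).symm
  have c7 : ¬ 7 ∣ a → Nat.Coprime a 7 := fun h =>
    ((by norm_num : Nat.Prime 7).coprime_iff_not_dvd.mpr h).symm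
  have hco : Nat.Coprime a d := by
    interval_cases d
    · exact Nat.coprime_one_right a
    · exact c2
    · exact c3
    · exact c2.mul_right c2
    · exact c5 (h5 ⟨1, rfl⟩)
    · exact c2.mul_right c3
    · exact c7 (h7 ⟨1, rfl⟩)
    · exact c2.mul_right (c2.mul_right c2)
    · exact c3.mul_right c3
    · exact c2.mul_right (c5 (h5 ⟨2, rfl⟩))
    · exact (by omega : False).elim
    · exact c2.mul_right (c2.mul_right c3)
    · exact (by omega : False).elim
    · exact c2.mul_right (c7 (h7 ⟨2, rfl⟩))
  have : Nat.gcd a b ∣ 1 := hco ▸ Nat.dvd_gcd hga hg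
  exact Nat.dvd_one.mp this

/-- All 7-hairy `n`-cycles `C_n ⋆ S_7` admit a prime vertex labeling. -/
theorem hairyCycle_seven_is_coprime (n : ℕ) (hn : 3 ≤ n) :
    ∃ f : Fin n × Fin 8 → ℕ,
      Set.BijOn f Set.univ (Set.Icc 1 (8 * n)) ∧
      ∀ u v, (hairyCycle n 7).Adj u v → Nat.gcd (f u) (f v) = 1 := by
  refine ⟨fun u => 8 * (u.1 : ℕ) + offL (cOff u.1) (u.2 : ℕ), ⟨?_, ?_, ?_⟩, ?_⟩
  · -- MapsTo
    rintro ⟨i, j⟩ -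
    have hs := cOff_spec (i : ℕ)
    have hj := j.isLt
    have hb := offL_bounds (cOff (i : ℕ)) (j : ℕ) hs.2.1 hs.2.2 (by omega)
    have hi := i.isLt
    simp only [Set.mem_Icc]
    omega
  · -- InjOn
    rintro ⟨i, j⟩ - ⟨i', j'⟩ - h
    simp only at h
    have hs := cOff_spec (i : ℕ)
    have hs' := cOff_spec (i' : ℕ)
    have hb := offL_bounds (cOff (i : ℕ)) (j : ℕ) hs.2.1 hs.2.2 (by omega)
    have hb' := offL_bounds (cOff (i' : ℕ)) (j' : ℕ) hs'.2.1 hs'.2.2 (by omega)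
    have hii : (i : ℕ) = (i' : ℕ) := by omega
    have hi2 : i = i' := Fin.ext hii
    subst hi2
    have hoff : offL (cOff (i : ℕ)) (j : ℕ) = offL (cOff (i : ℕ)) (j' : ℕ) := by omega
    have hjj := offL_inj _ _ _ hoff
    have hjf : j = j' := Fin.ext hjj
    rw [hjf]
  · -- SurjOn
    rintro y hy
    simp only [Set.mem_Icc] at hy
    obtain ⟨hy1, hy2⟩ := hy
    set i := (y - 1) / 8 with hidef
    have hin : i < n := by omega
    have hs := cOff_spec i
    set t := y - 8 * i with htdef
    have htb : 1 ≤ t ∧ t ≤ 8 := by omega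
    rcases lt_trichotomy t (cOff i) with h | h | h
    · refine ⟨(⟨i, hin⟩, ⟨t, by omega⟩), Set.mem_univ _, ?_⟩
      show 8 * i + offL (cOff i) t = y
      unfold offL; split_ifs <;> omega
    · refine ⟨(⟨i, hin⟩, ⟨0, by omega⟩), Set.mem_univ _, ?_⟩
      show 8 * i + offL (cOff i) 0 = y
      unfold offL; split_ifs <;> omega
    · refine ⟨(⟨i, hin⟩, ⟨t - 1, by omega⟩), Set.mem_univ _, ?_⟩
      show 8 * i + offL (cOff i) (t - 1) = y
      unfold offL; split_ifs <;> omega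
  · -- coprimality
    have key : ∀ u v : Fin n × Fin 8,
        ((u.2 = 0 ∧ v.2 = 0 ∧ (v.1 : ℕ) = ((u.1 : ℕ) + 1) % n) ∨
         (u.2 = 0 ∧ v.1 = u.1 ∧ v.2 ≠ 0)) →
        Nat.gcd (8 * (u.1 : ℕ) + offL (cOff (u.1 : ℕ)) (u.2 : ℕ))
          (8 * (v.1 : ℕ) + offL (cOff (v.1 : ℕ)) (v.2 : ℕ)) = 1 := by
      have hv0 : ((0 : Fin 8) : ℕ) = 0 := rfl
      have hoff0 : ∀ c : ℕ, offL c 0 = c := fun c => if_pos rfl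
      intro u v huv
      rcases huv with ⟨hj, hj', hcyc⟩ | ⟨hj, hi', hj'⟩
      · -- cycle edge
        rw [hj, hj', hv0, hoff0, hoff0]
        have hs := cOff_spec (u.1 : ℕ)
        by_cases hlt : (u.1 : ℕ) + 1 < n
        · have hieq : (v.1 : ℕ) = (u.1 : ℕ) + 1 := by
            rw [hcyc]; exact Nat.mod_eq_of_lt hlt
          rw [hieq]
          have hs' := cOff_spec ((u.1 : ℕ) + 1)
          refine cop' _ _ (8 + cOff ((u.1 : ℕ) + 1) - cOff (u.1 : ℕ))
            (Or.inl (by omega)) (by omega) (cOff_mod3 _) ?_ ?_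
            (by omega) (by omega) (by omega) (by omega)
          · intro h5d h5a
            by_cases h5cv : cOff (u.1 : ℕ) = 5
            · have h7cv : cOff ((u.1 : ℕ) + 1) = 7 := by omega
              have := cOff_seven _ h7cv
              omega
            · have := cOff_mod5 _ h5cv
              omega
          · intro h7d h7a
            have h1 : cOff (u.1 : ℕ) = 1 := by omega
            have := cOff_mod7 _ h1
            omega
        · have hieq : (v.1 : ℕ) = 0 := by
            have hn1 : (u.1 : ℕ) + 1 = n := by have := u.1.isLt; omega
            rw [hcyc, hn1, Nat.mod_self]
          rw [hieq]
          simp [cOff]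
      · -- pendant edge
        rw [hj, hi', hv0, hoff0]
        have hs := cOff_spec (u.1 : ℕ)
        have hjle : (v.2 : ℕ) ≤ 7 := by have := v.2.isLt; omega
        have hjnz : (v.2 : ℕ) ≠ 0 := by
          intro h0
          exact hj' (Fin.ext (h0.trans hv0.symm))
        set t := offL (cOff (u.1 : ℕ)) (v.2 : ℕ) with htdef
        have htb : 1 ≤ t ∧ t ≤ 8 :=
          offL_bounds _ _ hs.2.1 hs.2.2 hjle
        have htf : t = if (v.2 : ℕ) < cOff (u.1 : ℕ) then (v.2 : ℕ) else (v.2 : ℕ) + 1 := by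
          rw [htdef, offL, if_neg hjnz]
        have htne : t ≠ cOff (u.1 : ℕ) := by split_ifs at htf <;> omega
        rcases lt_or_gt_of_ne htne with h | h
        · refine cop' _ _ (cOff (u.1 : ℕ) - t) (Or.inr (by omega)) (by omega)
            (cOff_mod3 _) ?_ ?_ (by omega) (by omega) (by omega) (by omega)
          · intro h5d h5a
            by_cases h5cv : cOff (u.1 : ℕ) = 5
            · omega
            · have := cOff_mod5 _ h5cv; omega
          · intro h7d; omega
        · refine cop' _ _ (t - cOff (u.1 : ℕ)) (Or.inl (by omega)) (by omega)
            (cOff_mod3 _) ?_ ?_ (by omega) (by omega) (by omega) (by omega)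
          · intro h5d h5a
            by_cases h5cv : cOff (u.1 : ℕ) = 5
            · omega
            · have := cOff_mod5 _ h5cv; omega
          · intro h7d h7a
            have h1 : cOff (u.1 : ℕ) = 1 := by omega
            have := cOff_mod7 _ h1
            omega
    intro u v hadj
    simp only [hairyCycle, SimpleGraph.fromRel_adj] at hadj
    rcases hadj with ⟨-, h | h⟩
    · exact key u v h
    · rw [Nat.gcd_comm]; exact key v u h
end

section
/- For every natural number n ≥ 3, the Bertrand Weed graph BW_n admits a prime vertex labeling; that is, there exists a bijection f from the vertex set of BW_n onto {1, 2, ..., 2^(n+1) − 2} such that whenever two vertices u and v are adjacent, gcd(f(u), f(v)) = 1. -/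
/-- The Bertrand Weed graph `BW_n` on vertex set `Σ i : Fin n, Fin (2^(i+1))`:
the vertices `(i, 0)` form the cycle (with `(i,0)` adjacent to `(j,0)` iff
`j = i + 1 (mod n)` or `i = j + 1 (mod n)`), and for `j ≠ 0` the pendant
vertex `(i, j)` is adjacent exactly to `(i, 0)`; thus the cycle vertex `c_i`
(for `i = 0, ..., n-1` here, corresponding to `c_{i+1}` in 1-indexed notation)
carries `2^(i+1) - 1` pendants. -/
def bertrandWeed (n : ℕ) : SimpleGraph (Σ i : Fin n, Fin (2 ^ ((i : ℕ) + 1))) :=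
  SimpleGraph.fromRel fun a b =>
    ((a.2 : ℕ) = 0 ∧ (b.2 : ℕ) = 0 ∧ (b.1 : ℕ) = ((a.1 : ℕ) + 1) % n) ∨
    ((a.2 : ℕ) = 0 ∧ b.1 = a.1 ∧ (b.2 : ℕ) ≠ 0)

/-- Swap `0` and `k`. -/
def gswap (k j : ℕ) : ℕ := if j = 0 then k else if j = k then 0 else j

lemma gswap_invol {k : ℕ} (hk : k ≠ 0) (j : ℕ) : gswap k (gswap k j) = j := by
  unfold gswap; split_ifs <;> omega

lemma gswap_lt {k j m : ℕ} (hk : k < m) (hj : j < m) : gswap k j < m := by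
  unfold gswap; split_ifs <;> omega

lemma gswap_zero (k : ℕ) : gswap k 0 = k := by simp [gswap]

/-- All Bertrand Weed graphs `BW_n` admit a prime vertex labeling. -/
theorem bertrandWeed_is_coprime (n : ℕ) (hn : 3 ≤ n) :
    ∃ f : (Σ i : Fin n, Fin (2 ^ ((i : ℕ) + 1))) → ℕ,
      Set.BijOn f Set.univ (Set.Icc 1 (2 ^ (n + 1) - 2)) ∧
      ∀ u v, (bertrandWeed n).Adj u v → Nat.gcd (f u) (f v) = 1 := by
  classical
  have hb2 : ∀ i : Fin n, 2 ≤ 2 ^ ((i : ℕ) + 1) := fun i => by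
    calc (2:ℕ) = 2 ^ 1 := rfl
    _ ≤ 2 ^ ((i : ℕ) + 1) := Nat.pow_le_pow_right (by norm_num) (by omega)
  choose p hpp hlb hub using fun i : Fin n =>
    Nat.exists_prime_lt_and_le_two_mul (2 ^ ((i : ℕ) + 1) - 1) (by have := hb2 i; omega)
  set kk : Fin n → ℕ := fun i => p i - (2 ^ ((i : ℕ) + 1) - 1) with hkk
  have hk : ∀ i : Fin n, 1 ≤ kk i ∧ kk i ≤ 2 ^ ((i : ℕ) + 1) - 1 := by
    intro i
    have h1 := hlb i; have h2 := hub i; have h3 := hb2 i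
    constructor <;> simp only [hkk] <;> omega
  have hpk : ∀ i : Fin n, p i = 2 ^ ((i : ℕ) + 1) - 1 + kk i := by
    intro i; have h1 := hlb i; simp only [hkk]; omega
  set q : (Σ i : Fin n, Fin (2 ^ ((i : ℕ) + 1))) → ℕ :=
    fun v => 2 ^ ((v.1 : ℕ) + 1) - 1 + gswap (kk v.1) (v.2 : ℕ) with hq
  have hqval : ∀ v, q v = 2 ^ ((v.1 : ℕ) + 1) - 1 + gswap (kk v.1) (v.2 : ℕ) := fun v => rfl
  have hq0 : ∀ v, (v.2 : ℕ) = 0 → q v = p v.1 := by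
    intro v h
    rw [hqval, h, gswap_zero, hpk]
  have hqb : ∀ v, 2 ^ ((v.1 : ℕ) + 1) - 1 ≤ q v ∧ q v ≤ 2 * (2 ^ ((v.1 : ℕ) + 1) - 1) := by
    intro v
    have h2 := hb2 v.1
    have hkv := hk v.1
    have hg : gswap (kk v.1) (v.2 : ℕ) < 2 ^ ((v.1 : ℕ) + 1) :=
      gswap_lt (by omega) v.2.isLt
    rw [hqval]; omega
  have hmono : ∀ i i' : Fin n, (i : ℕ) < (i' : ℕ) →
      2 * (2 ^ ((i : ℕ) + 1) - 1) < 2 ^ ((i' : ℕ) + 1) - 1 := by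
    intro i i' h
    have h1 : 2 ^ ((i : ℕ) + 1 + 1) ≤ 2 ^ ((i' : ℕ) + 1) :=
      Nat.pow_le_pow_right (by norm_num) (by omega)
    have h2 : 2 ^ ((i : ℕ) + 1 + 1) = 2 * 2 ^ ((i : ℕ) + 1) := by ring
    have h3 := hb2 i; have h4 := hb2 i'
    omega
  have hpne : ∀ i i' : Fin n, i ≠ i' → p i ≠ p i' := by
    intro i i' hne
    have hvne : (i : ℕ) ≠ (i' : ℕ) := fun h => hne (Fin.ext h)
    have h1 := hlb i; have h2 := hub i; have h3 := hlb i'; have h4 := hub i'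
    rcases Nat.lt_or_ge (i : ℕ) (i' : ℕ) with h | h
    · have := hmono i i' h; omega
    · have := hmono i' i (by omega); omega
  -- the two coprimality helper lemmas
  have hcyc : ∀ u v, u ≠ v → (u.2 : ℕ) = 0 → (v.2 : ℕ) = 0 → Nat.gcd (q u) (q v) = 1 := by
    intro u v hne h0 h0'
    obtain ⟨i, j⟩ := u; obtain ⟨i', j'⟩ := v
    have hii : i ≠ i' := by
      rintro rfl
      exact hne (by rw [show j = j' from Fin.ext (by simp only at h0 h0'; omega)])
    rw [hq0 _ h0, hq0 _ h0']
    exact (Nat.coprime_primes (hpp i) (hpp i')).mpr (hpne i i' hii)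
  have hpend : ∀ u v, (u.2 : ℕ) = 0 → v.1 = u.1 → (v.2 : ℕ) ≠ 0 →
      Nat.gcd (q u) (q v) = 1 := by
    intro u v h0 h1 h2
    obtain ⟨i, j⟩ := u; obtain ⟨i', j'⟩ := v
    simp only at h0 h1 h2
    subst h1
    rw [hq0 _ h0]
    refine (Nat.Prime.coprime_iff_not_dvd (hpp i')).mpr ?_
    intro hdvd
    have hqv := hqb ⟨i', j'⟩
    simp only at hqv
    have hbp := hlb i'; have hbu := hub i'; have h2b := hb2 i'
    -- from divisibility and bounds, q ⟨i',j'⟩ = p i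
    have heq : q ⟨i', j'⟩ = p i' := by
      obtain ⟨t, ht⟩ := hdvd
      have ht0 : t ≠ 0 := by rintro rfl; omega
      have ht2 : t < 2 := by
        by_contra hc
        push_neg at hc
        have : p i' * 2 ≤ p i' * t := Nat.mul_le_mul_left _ hc
        omega
      have : t = 1 := by omega
      rw [ht, this, mul_one]
    -- but q ⟨i',j'⟩ ≠ p i' since j' ≠ 0
    have hne' : q ⟨i', j'⟩ ≠ p i' := by
      rw [hqval, hpk i']
      simp only
      unfold gswap
      have hkv := hk i'
      split_ifs with ha hb
      · exact absurd ha h2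
      · omega
      · omega
    exact hne' heq
  refine ⟨q, ⟨?_, ?_, ?_⟩, ?_⟩
  · -- MapsTo
    intro v _
    simp only [Set.mem_Icc]
    have h1 := hqb v
    have h2 := hb2 v.1
    have h3 : 2 ^ ((v.1 : ℕ) + 1 + 1) ≤ 2 ^ (n + 1) :=
      Nat.pow_le_pow_right (by norm_num) (by have := v.1.isLt; omega)
    have h4 : 2 ^ ((v.1 : ℕ) + 1 + 1) = 2 * 2 ^ ((v.1 : ℕ) + 1) := by ring
    omega
  · -- InjOn
    intro u _ v _ h
    obtain ⟨i, j⟩ := u; obtain ⟨i', j'⟩ := v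
    have hbu := hqb ⟨i, j⟩; have hbv := hqb ⟨i', j'⟩
    simp only at hbu hbv
    have hii : (i : ℕ) = (i' : ℕ) := by
      by_contra hc
      rcases Nat.lt_or_ge (i : ℕ) (i' : ℕ) with hlt | hge
      · have := hmono i i' hlt; omega
      · have := hmono i' i (by omega); omega
    have : i = i' := Fin.ext hii
    subst this
    rw [hqval, hqval] at h
    simp only at h
    have hg : gswap (kk i) (j : ℕ) = gswap (kk i) (j' : ℕ) := by omega
    have hk1 := hk i
    have hjj : (j : ℕ) = (j' : ℕ) := by
      have := congrArg (gswap (kk i)) hg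
      rwa [gswap_invol (by omega), gswap_invol (by omega)] at this
    rw [show j = j' from Fin.ext hjj]
  · -- SurjOn
    intro m hm
    simp only [Set.mem_Icc] at hm
    set L := Nat.log 2 (m + 1) with hL
    have h1 : 2 ^ L ≤ m + 1 := Nat.pow_log_le_self 2 (by omega)
    have h2 : m + 1 < 2 ^ (L + 1) := Nat.lt_pow_succ_log_self (by norm_num) _
    have hL1 : 1 ≤ L := by
      have h21 : (2 : ℕ) ^ 1 ≤ m + 1 := by rw [pow_one]; omega
      exact (Nat.le_log_iff_pow_le (by norm_num) (by omega)).mpr h21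
    have hpos : 1 ≤ 2 ^ (n + 1) := Nat.one_le_two_pow
    have hLn : L ≤ n := by
      have hlt : 2 ^ L < 2 ^ (n + 1) := by omega
      have := (Nat.pow_lt_pow_iff_right (a := 2) (by norm_num)).mp hlt
      omega
    set i : Fin n := ⟨L - 1, by omega⟩ with hi
    have hpow : 2 ^ ((i : ℕ) + 1) = 2 ^ L := by
      have hv : (i : ℕ) = L - 1 := rfl
      rw [hv]; congr 1; omega
    have h2L : 2 ≤ 2 ^ L := by have := hb2 i; omega
    have h2L1 : 2 ^ (L + 1) = 2 * 2 ^ L := by ring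
    have hmb : 2 ^ L - 1 ≤ m ∧ m ≤ 2 * (2 ^ L - 1) := by omega
    set t := m - (2 ^ L - 1) with hT
    have ht : t < 2 ^ L := by omega
    have hkL : kk i < 2 ^ L := by have := hk i; omega
    have hj : gswap (kk i) t < 2 ^ ((i : ℕ) + 1) := by
      rw [hpow]; exact gswap_lt hkL ht
    refine ⟨⟨i, ⟨gswap (kk i) t, hj⟩⟩, Set.mem_univ _, ?_⟩
    rw [hqval]
    simp only [hpow]
    rw [gswap_invol (by have := hk i; omega)]
    omega
  · -- coprimality on edges
    intro u v hadj
    rw [bertrandWeed, SimpleGraph.fromRel_adj] at hadj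
    obtain ⟨hne, h⟩ := hadj
    rcases h with (h | h) | (h | h)
    · exact hcyc u v hne h.1 h.2.1
    · exact hpend u v h.1 h.2.1 h.2.2
    · exact hcyc u v hne h.2.1 h.1
    · rw [Nat.gcd_comm]; exact hpend v u h.1 h.2.1 h.2.2
end

section
/- For every natural number i ≥ 1 and every natural number m with 8i − 7 ≤ m ≤ 8i and m ≠ L(i), one has gcd(L(i), m) = 1, where L(i) = 8i − 5 if i mod 15 ∈ {2, 3, 6, 8, 9, 11, 12, 14}, L(i) = 8i − 3 if i mod 15 ∈ {4, 5, 7, 10, 13}, and L(i) = 8i − 1 if i mod 15 ∈ {0, 1}. -/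
/-- The cycle-vertex label in the prime vertex labeling of the 7-hairy
`n`-cycle: within the block `{8i-7, ..., 8i}`, the label `L i` is chosen by
cases on `i mod 15`. -/
def hairySevenLabel (i : ℕ) : ℕ :=
  if i % 15 ∈ ({2, 3, 6, 8, 9, 11, 12, 14} : Finset ℕ) then 8 * i - 5
  else if i % 15 ∈ ({4, 5, 7, 10, 13} : Finset ℕ) then 8 * i - 3
  else 8 * i - 1

lemma hairy_gcd_aux (L m : ℕ) (hne : L ≠ m) (hb1 : L ≤ m + 6) (hb2 : m ≤ L + 6)
    (h2 : ¬ 2 ∣ L) (h3 : ¬ 3 ∣ L) (h5 : ¬ 5 ∣ L) : Nat.gcd L m = 1 := by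
  set d := Nat.gcd L m with hd
  have hdL : d ∣ L := Nat.gcd_dvd_left L m
  have hdM : d ∣ m := Nat.gcd_dvd_right L m
  have hL0 : L ≠ 0 := by rintro rfl; exact h2 ⟨0, rfl⟩
  have hdpos : 1 ≤ d := Nat.pos_of_ne_zero (fun h => hL0 (by
    have := hdL; rw [h] at this; exact Nat.eq_zero_of_zero_dvd this))
  rcases le_or_gt L m with h | h
  · have hdd : d ∣ m - L := Nat.dvd_sub hdM hdL
    have hle : d ≤ m - L := Nat.le_of_dvd (by omega) hdd
    have hle6 : d ≤ 6 := by omega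
    interval_cases d
    · rfl
    · exact absurd hdL h2
    · exact absurd hdL h3
    · exact absurd (dvd_trans ⟨2, rfl⟩ hdL) h2
    · exact absurd hdL h5
    · exact absurd (dvd_trans ⟨3, rfl⟩ hdL) h2
  · have hdd : d ∣ L - m := Nat.dvd_sub hdL hdM
    have hle : d ≤ L - m := Nat.le_of_dvd (by omega) hdd
    have hle6 : d ≤ 6 := by omega
    interval_cases d
    · rfl
    · exact absurd hdL h2
    · exact absurd hdL h3
    · exact absurd (dvd_trans ⟨2, rfl⟩ hdL) h2
    · exact absurd hdL h5
    · exact absurd (dvd_trans ⟨3, rfl⟩ hdL) h2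

/-- For every `i ≥ 1`, the label `L i` is relatively prime to every other
element of its block `{8i-7, ..., 8i}`. -/
theorem hairySevenLabel_coprime_block (i : ℕ) (hi : 1 ≤ i) (m : ℕ)
    (h1 : 8 * i - 7 ≤ m) (h2 : m ≤ 8 * i) (hm : m ≠ hairySevenLabel i) :
    Nat.gcd (hairySevenLabel i) m = 1 := by
  unfold hairySevenLabel at *
  split_ifs at hm ⊢ with ha hb
  · simp only [Finset.mem_insert, Finset.mem_singleton] at ha
    exact hairy_gcd_aux _ _ (Ne.symm hm) (by omega) (by omega)
      (by omega) (by omega) (by omega)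
  · simp only [Finset.mem_insert, Finset.mem_singleton] at ha hb
    exact hairy_gcd_aux _ _ (Ne.symm hm) (by omega) (by omega)
      (by omega) (by omega) (by omega)
  · simp only [Finset.mem_insert, Finset.mem_singleton] at ha hb
    exact hairy_gcd_aux _ _ (Ne.symm hm) (by omega) (by omega)
      (by omega) (by omega) (by omega)
end

section
/- For every natural number i ≥ 1, gcd(L(i), L(i+1)) = 1, where L(i) = 8i − 5 if i mod 15 ∈ {2, 3, 6, 8, 9, 11, 12, 14}, L(i) = 8i − 3 if i mod 15 ∈ {4, 5, 7, 10, 13}, and L(i) = 8i − 1 if i mod 15 ∈ {0, 1}. -/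
lemma hairySeven_key (a c m : ℕ) (h : a % c = m) (h1 : Nat.gcd m c = 1) :
    Nat.gcd a (a + c) = 1 := by
  rw [Nat.add_comm, Nat.gcd_add_self_right, Nat.gcd_comm, Nat.gcd_rec, h]
  exact h1

/-- For every `i ≥ 1`, consecutive cycle-vertex labels `L i` and `L (i+1)`
are relatively prime. -/
theorem hairySevenLabel_coprime_succ (i : ℕ) (hi : 1 ≤ i) :
    Nat.gcd (hairySevenLabel i) (hairySevenLabel (i + 1)) = 1 := by
  have h15 : i % 15 = 0 ∨ i % 15 = 1 ∨ i % 15 = 2 ∨ i % 15 = 3 ∨ i % 15 = 4 ∨ i % 15 = 5 ∨ i % 15 = 6 ∨ i % 15 = 7 ∨ i % 15 = 8 ∨ i % 15 = 9 ∨ i % 15 = 10 ∨ i % 15 = 11 ∨ i % 15 = 12 ∨ i % 15 = 13 ∨ i % 15 = 14 := by omega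
  rcases h15 with h|h|h|h|h|h|h|h|h|h|h|h|h|h|h
  · have h2 : (i + 1) % 15 = 1 := by omega
    have ea : hairySevenLabel i = 8 * i - 1 := by simp [hairySevenLabel, h]
    have eb : hairySevenLabel (i + 1) = 8 * (i + 1) - 1 := by simp [hairySevenLabel, h2]
    rw [ea, eb, show 8 * (i + 1) - 1 = (8 * i - 1) + 8 from by omega]
    exact hairySeven_key _ 8 7 (by omega) (by decide)
  · have h2 : (i + 1) % 15 = 2 := by omega
    have ea : hairySevenLabel i = 8 * i - 1 := by simp [hairySevenLabel, h]
    have eb : hairySevenLabel (i + 1) = 8 * (i + 1) - 5 := by simp [hairySevenLabel, h2]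
    rw [ea, eb, show 8 * (i + 1) - 5 = (8 * i - 1) + 4 from by omega]
    exact hairySeven_key _ 4 3 (by omega) (by decide)
  · have h2 : (i + 1) % 15 = 3 := by omega
    have ea : hairySevenLabel i = 8 * i - 5 := by simp [hairySevenLabel, h]
    have eb : hairySevenLabel (i + 1) = 8 * (i + 1) - 5 := by simp [hairySevenLabel, h2]
    rw [ea, eb, show 8 * (i + 1) - 5 = (8 * i - 5) + 8 from by omega]
    exact hairySeven_key _ 8 3 (by omega) (by decide)
  · have h2 : (i + 1) % 15 = 4 := by omega
    have ea : hairySevenLabel i = 8 * i - 5 := by simp [hairySevenLabel, h]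
    have eb : hairySevenLabel (i + 1) = 8 * (i + 1) - 3 := by simp [hairySevenLabel, h2]
    rw [ea, eb, show 8 * (i + 1) - 3 = (8 * i - 5) + 10 from by omega]
    exact hairySeven_key _ 10 9 (by omega) (by decide)
  · have h2 : (i + 1) % 15 = 5 := by omega
    have ea : hairySevenLabel i = 8 * i - 3 := by simp [hairySevenLabel, h]
    have eb : hairySevenLabel (i + 1) = 8 * (i + 1) - 3 := by simp [hairySevenLabel, h2]
    rw [ea, eb, show 8 * (i + 1) - 3 = (8 * i - 3) + 8 from by omega]
    exact hairySeven_key _ 8 5 (by omega) (by decide)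
  · have h2 : (i + 1) % 15 = 6 := by omega
    have ea : hairySevenLabel i = 8 * i - 3 := by simp [hairySevenLabel, h]
    have eb : hairySevenLabel (i + 1) = 8 * (i + 1) - 5 := by simp [hairySevenLabel, h2]
    rw [ea, eb, show 8 * (i + 1) - 5 = (8 * i - 3) + 6 from by omega]
    exact hairySeven_key _ 6 1 (by omega) (by decide)
  · have h2 : (i + 1) % 15 = 7 := by omega
    have ea : hairySevenLabel i = 8 * i - 5 := by simp [hairySevenLabel, h]
    have eb : hairySevenLabel (i + 1) = 8 * (i + 1) - 3 := by simp [hairySevenLabel, h2]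
    rw [ea, eb, show 8 * (i + 1) - 3 = (8 * i - 5) + 10 from by omega]
    exact hairySeven_key _ 10 3 (by omega) (by decide)
  · have h2 : (i + 1) % 15 = 8 := by omega
    have ea : hairySevenLabel i = 8 * i - 3 := by simp [hairySevenLabel, h]
    have eb : hairySevenLabel (i + 1) = 8 * (i + 1) - 5 := by simp [hairySevenLabel, h2]
    rw [ea, eb, show 8 * (i + 1) - 5 = (8 * i - 3) + 6 from by omega]
    exact hairySeven_key _ 6 5 (by omega) (by decide)
  · have h2 : (i + 1) % 15 = 9 := by omega
    have ea : hairySevenLabel i = 8 * i - 5 := by simp [hairySevenLabel, h]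
    have eb : hairySevenLabel (i + 1) = 8 * (i + 1) - 5 := by simp [hairySevenLabel, h2]
    rw [ea, eb, show 8 * (i + 1) - 5 = (8 * i - 5) + 8 from by omega]
    exact hairySeven_key _ 8 3 (by omega) (by decide)
  · have h2 : (i + 1) % 15 = 10 := by omega
    have ea : hairySevenLabel i = 8 * i - 5 := by simp [hairySevenLabel, h]
    have eb : hairySevenLabel (i + 1) = 8 * (i + 1) - 3 := by simp [hairySevenLabel, h2]
    rw [ea, eb, show 8 * (i + 1) - 3 = (8 * i - 5) + 10 from by omega]
    exact hairySeven_key _ 10 7 (by omega) (by decide)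
  · have h2 : (i + 1) % 15 = 11 := by omega
    have ea : hairySevenLabel i = 8 * i - 3 := by simp [hairySevenLabel, h]
    have eb : hairySevenLabel (i + 1) = 8 * (i + 1) - 5 := by simp [hairySevenLabel, h2]
    rw [ea, eb, show 8 * (i + 1) - 5 = (8 * i - 3) + 6 from by omega]
    exact hairySeven_key _ 6 5 (by omega) (by decide)
  · have h2 : (i + 1) % 15 = 12 := by omega
    have ea : hairySevenLabel i = 8 * i - 5 := by simp [hairySevenLabel, h]
    have eb : hairySevenLabel (i + 1) = 8 * (i + 1) - 5 := by simp [hairySevenLabel, h2]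
    rw [ea, eb, show 8 * (i + 1) - 5 = (8 * i - 5) + 8 from by omega]
    exact hairySeven_key _ 8 3 (by omega) (by decide)
  · have h2 : (i + 1) % 15 = 13 := by omega
    have ea : hairySevenLabel i = 8 * i - 5 := by simp [hairySevenLabel, h]
    have eb : hairySevenLabel (i + 1) = 8 * (i + 1) - 3 := by simp [hairySevenLabel, h2]
    rw [ea, eb, show 8 * (i + 1) - 3 = (8 * i - 5) + 10 from by omega]
    exact hairySeven_key _ 10 1 (by omega) (by decide)
  · have h2 : (i + 1) % 15 = 14 := by omega
    have ea : hairySevenLabel i = 8 * i - 3 := by simp [hairySevenLabel, h]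
    have eb : hairySevenLabel (i + 1) = 8 * (i + 1) - 5 := by simp [hairySevenLabel, h2]
    rw [ea, eb, show 8 * (i + 1) - 5 = (8 * i - 3) + 6 from by omega]
    exact hairySeven_key _ 6 5 (by omega) (by decide)
  · have h2 : (i + 1) % 15 = 0 := by omega
    have ea : hairySevenLabel i = 8 * i - 5 := by simp [hairySevenLabel, h]
    have eb : hairySevenLabel (i + 1) = 8 * (i + 1) - 1 := by simp [hairySevenLabel, h2]
    rw [ea, eb, show 8 * (i + 1) - 1 = (8 * i - 5) + 12 from by omega]
    exact hairySeven_key _ 12 11 (by omega) (by decide)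
end
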